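/- (Constant-support dual optimum) There exists a minimizer w* of the map w ↦ max_{T∈𝒯(G)} Σ_{e∈T} w_e over probability distributions w on E such that all nonzero entries of w* are equal; consequently min_w max_T Σ_{e∈T} w_e = min over nonempty F ⊆ E of (|V(F)|−c(F))/|F|. -/

import Mathlib

open scoped Classical

/-- The number of connected components of the subgraph `(V(F), F)` determined by a set
of edges `F`. -/
noncomputable def numComponents {V : Type*} (F : Finset (Sym2 V)) : ℕ :=
  Nat.card ((SimpleGraph.fromEdgeSet (F : Set (Sym2 V))).induce
    {v : V | ∃ e ∈ F, v ∈ e}).ConnectedComponent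

open SimpleGraph
set_option linter.unusedSectionVars false
set_option maxHeartbeats 1000000

section Aux

variable {V : Type*} [DecidableEq V]

private def tri (H : SimpleGraph V) (u v x y : V) : Prop :=
  H.Reachable x y ∨ (H.Reachable x u ∧ H.Reachable v y) ∨
    (H.Reachable x v ∧ H.Reachable u y)

private lemma tri_comp {H : SimpleGraph V} {u v a b c : V}
    (h1 : tri H u v a b) (h2 : tri H u v b c) : tri H u v a c := by
  rcases h1 with h1 | ⟨h1, h1'⟩ | ⟨h1, h1'⟩ <;>
    rcases h2 with h2 | ⟨h2, h2'⟩ | ⟨h2, h2'⟩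
  · exact Or.inl (h1.trans h2)
  · exact Or.inr (Or.inl ⟨h1.trans h2, h2'⟩)
  · exact Or.inr (Or.inr ⟨h1.trans h2, h2'⟩)
  · exact Or.inr (Or.inl ⟨h1, h1'.trans h2⟩)
  · exact Or.inr (Or.inl ⟨h1, h2'⟩)
  · exact Or.inl (h1.trans h2')
  · exact Or.inr (Or.inr ⟨h1, h1'.trans h2⟩)
  · exact Or.inl (h1.trans h2')
  · exact Or.inr (Or.inr ⟨h1, h2'⟩)

lemma reachable_sup_edge_iff (H : SimpleGraph V) (u v x y : V) :
    (H ⊔ edge u v).Reachable x y ↔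
      H.Reachable x y ∨ (H.Reachable x u ∧ H.Reachable v y) ∨
        (H.Reachable x v ∧ H.Reachable u y) := by
  constructor
  · rintro ⟨p⟩
    induction p with
    | nil => exact Or.inl (Reachable.refl _)
    | @cons a b c h p ih =>
      have hab : tri H u v a b := by
        rcases h with hH | hE
        · exact Or.inl hH.reachable
        · rw [edge_adj] at hE
          rcases hE with ⟨⟨ha, hb⟩ | ⟨ha, hb⟩, _⟩
          · exact Or.inr (Or.inl ⟨by rw [ha], by rw [hb]⟩)
          · exact Or.inr (Or.inr ⟨by rw [ha], by rw [hb]⟩)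
      exact tri_comp hab ih
  · have hle : H ≤ H ⊔ edge u v := le_sup_left
    have huv : (H ⊔ edge u v).Reachable u v := by
      by_cases h : u = v
      · subst h; exact Reachable.refl _
      · exact Adj.reachable ((sup_adj _ _ _ _).mpr (Or.inr ((edge_adj u v u v).mpr ⟨Or.inl ⟨rfl, rfl⟩, h⟩)))
    rintro (h1 | ⟨h1, h2⟩ | ⟨h1, h2⟩)
    · exact h1.mono hle
    · exact ((h1.mono hle).trans huv).trans (h2.mono hle)
    · exact ((h1.mono hle).trans huv.symm).trans (h2.mono hle)

lemma card_cc_congr {H H' : SimpleGraph V}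
    (h : ∀ x y, H.Reachable x y ↔ H'.Reachable x y) :
    Nat.card H.ConnectedComponent = Nat.card H'.ConnectedComponent := by
  refine Nat.card_congr ⟨ConnectedComponent.lift (fun w => H'.connectedComponentMk w) ?_,
    ConnectedComponent.lift (fun w => H.connectedComponentMk w) ?_, ?_, ?_⟩
  · intro v w p _; exact ConnectedComponent.sound ((h v w).1 p.reachable)
  · intro v w p _; exact ConnectedComponent.sound ((h v w).2 p.reachable)
  · apply ConnectedComponent.ind; intro v; rfl
  · apply ConnectedComponent.ind; intro v; rfl

lemma card_cc_bot [Fintype V] :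
    Nat.card (⊥ : SimpleGraph V).ConnectedComponent = Fintype.card V := by
  rw [← Nat.card_eq_fintype_card]
  refine Nat.card_congr ⟨ConnectedComponent.lift id ?_, fun v => (⊥ : SimpleGraph V).connectedComponentMk v, ?_, ?_⟩
  · intro v w p _; exact reachable_bot.mp p.reachable
  · apply ConnectedComponent.ind; intro v; rfl
  · intro v; rfl

lemma card_cc_sup_edge [Fintype V] (H : SimpleGraph V) {u v : V}
    (hnr : ¬ H.Reachable u v) :
    Nat.card (H ⊔ edge u v).ConnectedComponent + 1 = Nat.card H.ConnectedComponent := by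
  classical
  have hne : u ≠ v := fun h => hnr (h ▸ Reachable.refl u)
  haveI : Fintype H.ConnectedComponent := Fintype.ofFinite _
  haveI : Fintype (H ⊔ edge u v).ConnectedComponent := Fintype.ofFinite _
  set cu := H.connectedComponentMk u with hcu
  set cv := H.connectedComponentMk v with hcv
  have hcucv : cu ≠ cv := fun h => hnr (ConnectedComponent.exact h)
  set φ : H.ConnectedComponent → (H ⊔ edge u v).ConnectedComponent :=
    ConnectedComponent.lift (fun w => (H ⊔ edge u v).connectedComponentMk w)
      (fun a b p _ => ConnectedComponent.sound (p.reachable.mono le_sup_left)) with hφ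
  have key : ∀ x y : H.ConnectedComponent, φ x = φ y ↔
      x = y ∨ (x = cu ∧ y = cv) ∨ (x = cv ∧ y = cu) := by
    refine ConnectedComponent.ind₂ ?_
    intro a b
    show (H ⊔ edge u v).connectedComponentMk a = (H ⊔ edge u v).connectedComponentMk b ↔ _
    rw [ConnectedComponent.eq, reachable_sup_edge_iff, hcu, hcv]
    simp only [ConnectedComponent.eq]
    tauto
  have hcard : ((Finset.univ : Finset H.ConnectedComponent).erase cv).card
      = (Finset.univ : Finset (H ⊔ edge u v).ConnectedComponent).card := by
    refine Finset.card_bij (fun x _ => φ x) (fun _ _ => Finset.mem_univ _) ?_ ?_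
    · intro x hx y hy hxy
      rcases (key x y).mp hxy with h | ⟨h1, h2⟩ | ⟨h1, h2⟩
      · exact h
      · exact absurd h2 (Finset.ne_of_mem_erase hy)
      · exact absurd h1 (Finset.ne_of_mem_erase hx)
    · refine ConnectedComponent.ind ?_
      intro a _
      by_cases ha : H.connectedComponentMk a = cv
      · refine ⟨cu, Finset.mem_erase.mpr ⟨hcucv, Finset.mem_univ _⟩, ?_⟩
        exact (key cu (H.connectedComponentMk a)).mpr (Or.inr (Or.inl ⟨rfl, ha⟩))
      · exact ⟨H.connectedComponentMk a, Finset.mem_erase.mpr ⟨ha, Finset.mem_univ _⟩, rfl⟩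
  rw [Nat.card_eq_fintype_card, Nat.card_eq_fintype_card, ← Finset.card_univ, ← Finset.card_univ,
    ← hcard, Finset.card_erase_of_mem (Finset.mem_univ _)]
  have : 0 < (Finset.univ : Finset H.ConnectedComponent).card :=
    Finset.card_pos.mpr ⟨cv, Finset.mem_univ _⟩
  omega

lemma isAcyclic_anti {H H' : SimpleGraph V} (hle : H ≤ H') (h : H'.IsAcyclic) :
    H.IsAcyclic := fun _ c hc => h (c.mapLe hle) (hc.mapLe hle)

variable [Fintype V]

/-- number of connected components of `fromEdgeSet F` on all of `V`. -/
noncomputable def Ncc (F : Finset (Sym2 V)) : ℕ :=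
  Nat.card (SimpleGraph.fromEdgeSet (F : Set (Sym2 V))).ConnectedComponent

lemma fromEdgeSet_insert' (e : Sym2 V) (F : Finset (Sym2 V)) (u v : V) (he : e = s(u, v)) :
    SimpleGraph.fromEdgeSet ((insert e F : Finset (Sym2 V)) : Set (Sym2 V))
      = SimpleGraph.fromEdgeSet (F : Set (Sym2 V)) ⊔ edge u v := by
  rw [Finset.coe_insert, Set.insert_eq, fromEdgeSet_union, he, sup_comm]
  rfl

lemma Ncc_empty : Ncc (∅ : Finset (Sym2 V)) = Fintype.card V := by
  unfold Ncc
  rw [Finset.coe_empty, SimpleGraph.fromEdgeSet_empty]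
  exact card_cc_bot

lemma Ncc_insert_reachable {F : Finset (Sym2 V)} {u v : V}
    (h : (SimpleGraph.fromEdgeSet (F : Set (Sym2 V))).Reachable u v) :
    Ncc (insert s(u, v) F) = Ncc F := by
  unfold Ncc
  rw [fromEdgeSet_insert' _ _ u v rfl]
  refine (card_cc_congr ?_).symm
  intro x y
  rw [reachable_sup_edge_iff]
  constructor
  · exact Or.inl
  · rintro (h1 | ⟨h1, h2⟩ | ⟨h1, h2⟩)
    · exact h1
    · exact (h1.trans h).trans h2
    · exact (h1.trans h.symm).trans h2

lemma Ncc_insert_not_reachable {F : Finset (Sym2 V)} {u v : V}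
    (h : ¬ (SimpleGraph.fromEdgeSet (F : Set (Sym2 V))).Reachable u v) :
    Ncc (insert s(u, v) F) + 1 = Ncc F := by
  unfold Ncc
  rw [fromEdgeSet_insert' _ _ u v rfl]
  exact card_cc_sup_edge _ h

lemma Ncc_insert_le (e : Sym2 V) (F : Finset (Sym2 V)) : Ncc (insert e F) ≤ Ncc F := by
  induction e with
  | _ u v =>
    by_cases h : (SimpleGraph.fromEdgeSet (F : Set (Sym2 V))).Reachable u v
    · rw [Ncc_insert_reachable h]
    · rw [← Ncc_insert_not_reachable h]; omega

lemma Ncc_ge_insert (e : Sym2 V) (F : Finset (Sym2 V)) : Ncc F ≤ Ncc (insert e F) + 1 := by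
  induction e with
  | _ u v =>
    by_cases h : (SimpleGraph.fromEdgeSet (F : Set (Sym2 V))).Reachable u v
    · rw [Ncc_insert_reachable h]; omega
    · rw [← Ncc_insert_not_reachable h]

lemma Ncc_anti {F F' : Finset (Sym2 V)} (h : F ⊆ F') : Ncc F' ≤ Ncc F := by
  classical
  have key : ∀ D F₀ : Finset (Sym2 V), Ncc (F₀ ∪ D) ≤ Ncc F₀ := by
    intro D
    induction D using Finset.induction with
    | empty => intro F₀; rw [Finset.union_empty]
    | @insert a D ha ih =>
      intro F₀
      rw [Finset.union_insert]
      exact (Ncc_insert_le _ _).trans (ih F₀)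
  have : F' = F ∪ F' := by rw [Finset.union_eq_right.mpr]; exact h
  calc Ncc F' = Ncc (F ∪ F') := by rw [← this]
  _ ≤ Ncc F := key F' F

lemma Ncc_le_card : ∀ F : Finset (Sym2 V), Ncc F ≤ Fintype.card V := by
  intro F
  rw [← Ncc_empty]
  exact Ncc_anti (Finset.empty_subset F)

lemma reach_insert_reachable_iff {F : Finset (Sym2 V)} {u v : V}
    (h : (SimpleGraph.fromEdgeSet (F : Set (Sym2 V))).Reachable u v) (x y : V) :
    (SimpleGraph.fromEdgeSet ((insert s(u,v) F : Finset (Sym2 V)) : Set (Sym2 V))).Reachable x y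
      ↔ (SimpleGraph.fromEdgeSet (F : Set (Sym2 V))).Reachable x y := by
  rw [fromEdgeSet_insert' _ _ u v rfl, reachable_sup_edge_iff]
  constructor
  · rintro (h1 | ⟨h1, h2⟩ | ⟨h1, h2⟩)
    · exact h1
    · exact (h1.trans h).trans h2
    · exact (h1.trans h.symm).trans h2
  · exact Or.inl

lemma bridge_not_reachable {F : Finset (Sym2 V)} {u v : V} (hne : u ≠ v)
    (he : s(u,v) ∉ F)
    (hac : (SimpleGraph.fromEdgeSet ((insert s(u,v) F : Finset (Sym2 V)) : Set (Sym2 V))).IsAcyclic) :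
    ¬ (SimpleGraph.fromEdgeSet (F : Set (Sym2 V))).Reachable u v := by
  have hmem : s(u,v) ∈ (SimpleGraph.fromEdgeSet ((insert s(u,v) F : Finset (Sym2 V)) : Set (Sym2 V))).edgeSet := by
    rw [mem_edgeSet, fromEdgeSet_adj]
    exact ⟨by simp, hne⟩
  have hb := isAcyclic_iff_forall_edge_isBridge.mp hac hmem
  rw [isBridge_iff] at hb
  have hgr : (SimpleGraph.fromEdgeSet ((insert s(u,v) F : Finset (Sym2 V)) : Set (Sym2 V)))
      \ SimpleGraph.fromEdgeSet {s(u,v)} = SimpleGraph.fromEdgeSet (F : Set (Sym2 V)) := by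
    rw [← fromEdgeSet_sdiff]
    congr 1
    rw [Finset.coe_insert, Set.insert_diff_self_of_notMem (by exact_mod_cast he)]
  rw [deleteEdges, hgr] at hb
  exact hb

lemma ncc_add_card_of_acyclic : ∀ (A : Finset (Sym2 V)), (∀ e ∈ A, ¬ e.IsDiag) →
    (SimpleGraph.fromEdgeSet (A : Set (Sym2 V))).IsAcyclic →
    Ncc A + A.card = Fintype.card V := by
  classical
  intro A
  induction A using Finset.induction with
  | empty => intro _ _; simpa using Ncc_empty
  | @insert e F he ih =>
    induction e with
    | _ u v =>
      intro hd hac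
      have hne : u ≠ v := by
        have := hd s(u,v) (Finset.mem_insert_self _ _)
        simpa [Sym2.isDiag_iff_proj_eq] using this
      have hnr := bridge_not_reachable hne he hac
      have hF : (SimpleGraph.fromEdgeSet (F : Set (Sym2 V))).IsAcyclic :=
        isAcyclic_anti (fromEdgeSet_mono (by exact_mod_cast Finset.subset_insert _ _)) hac
      have hih := ih (fun e' h' => hd e' (Finset.mem_insert_of_mem h')) hF
      have hn := Ncc_insert_not_reachable hnr
      rw [Finset.card_insert_of_notMem he]
      omega

lemma isAcyclic_insert {A : Finset (Sym2 V)} {u v : V} (hne : u ≠ v)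
    (hac : (SimpleGraph.fromEdgeSet (A : Set (Sym2 V))).IsAcyclic)
    (hnr : ¬ (SimpleGraph.fromEdgeSet (A : Set (Sym2 V))).Reachable u v) :
    (SimpleGraph.fromEdgeSet ((insert s(u,v) A : Finset (Sym2 V)) : Set (Sym2 V))).IsAcyclic := by
  classical
  set H := SimpleGraph.fromEdgeSet (A : Set (Sym2 V)) with hH
  have hnotmem : s(u,v) ∉ H.edgeSet := fun h => hnr ((mem_edgeSet H).mp h).reachable
  rw [fromEdgeSet_insert' _ _ u v rfl, ← hH]
  rw [isAcyclic_iff_forall_edge_isBridge]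
  intro e' he'
  have hedge : edge u v = SimpleGraph.fromEdgeSet {s(u,v)} := rfl
  rw [edgeSet_sup] at he'
  rcases he' with he' | he'
  · -- e' is an edge of H
    revert he'
    induction e' with
    | _ a b =>
      intro he'
      have hadj : H.Adj a b := (mem_edgeSet H).mp he'
      have hb := isAcyclic_iff_forall_edge_isBridge.mp hac he'
      rw [isBridge_iff] at hb ⊢
      have hne' : s(u,v) ≠ s(a,b) := fun h => hnotmem (h ▸ he')
      have hdisj : Disjoint (edge u v) (SimpleGraph.fromEdgeSet {s(a,b)}) := by
        rw [hedge, fromEdgeSet_disjoint, edgeSet_fromEdgeSet]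
        exact Set.disjoint_singleton_left.mpr (fun h => hne' h.1)
      have hgr : (H ⊔ edge u v) \ SimpleGraph.fromEdgeSet {s(a,b)}
          = (H \ SimpleGraph.fromEdgeSet {s(a,b)}) ⊔ edge u v := by
        rw [sup_sdiff, sdiff_eq_left.mpr hdisj]
      rw [deleteEdges, hgr]
      intro hr
      rw [reachable_sup_edge_iff] at hr
      have hmono : (H \ SimpleGraph.fromEdgeSet {s(a,b)}) ≤ H := sdiff_le
      rcases hr with h1 | ⟨h1, h2⟩ | ⟨h1, h2⟩
      · exact hb h1
      · exact hnr ((((h1.mono hmono).symm.trans hadj.reachable).trans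
          (h2.mono hmono).symm).symm.symm)
      · exact hnr (((h2.mono hmono).trans (hadj.symm.reachable.trans (h1.mono hmono))).symm.symm)
  · -- e' = s(u,v)
    rw [edge_edgeSet_of_ne hne] at he'
    rw [Set.mem_singleton_iff] at he'
    subst he'
    rw [isBridge_iff]
    have hdisj : Disjoint H (edge u v) := by
      rw [hedge, disjoint_fromEdgeSet]
      simpa using hnotmem
    have hgr : (H ⊔ edge u v) \ SimpleGraph.fromEdgeSet {s(u,v)} = H := by
      rw [← hedge, sup_sdiff, sdiff_self, sup_bot_eq, sdiff_eq_left.mpr hdisj]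
    rw [deleteEdges, hgr]
    exact hnr

noncomputable def sameComp (A : Finset (Sym2 V)) (e : Sym2 V) : Prop :=
  ∃ x y : V, e = s(x,y) ∧ (SimpleGraph.fromEdgeSet (A : Set (Sym2 V))).Reachable x y

lemma sameComp_iff (A : Finset (Sym2 V)) (u v : V) :
    sameComp A s(u,v) ↔ (SimpleGraph.fromEdgeSet (A : Set (Sym2 V))).Reachable u v := by
  constructor
  · rintro ⟨x, y, hxy, hr⟩
    rcases Sym2.eq_iff.mp hxy with ⟨rfl, rfl⟩ | ⟨rfl, rfl⟩
    · exact hr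
    · exact hr.symm
  · intro h; exact ⟨u, v, rfl, h⟩

noncomputable def kgo : List (Sym2 V) → Finset (Sym2 V)
  | [] => ∅
  | e :: M => if sameComp (kgo M) e then kgo M else insert e (kgo M)

noncomputable def kruskal (L : List (Sym2 V)) : Finset (Sym2 V) := kgo L.reverse

lemma kruskal_take_succ (L : List (Sym2 V)) (k : ℕ) (h : k < L.length) :
    kruskal (L.take (k+1)) =
      (if sameComp (kruskal (L.take k)) (L.get ⟨k, h⟩) then kruskal (L.take k)
        else insert (L.get ⟨k, h⟩) (kruskal (L.take k))) := by
  have : (L.take (k+1)).reverse = L.get ⟨k, h⟩ :: (L.take k).reverse := by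
    rw [List.take_succ]
    simp [List.getElem?_eq_getElem h]
  rw [kruskal, this]
  rfl

lemma kruskal_mono_step (L : List (Sym2 V)) (k : ℕ) (h : k < L.length) :
    kruskal (L.take k) ⊆ kruskal (L.take (k+1)) := by
  rw [kruskal_take_succ L k h]
  split
  · exact Finset.Subset.refl _
  · exact Finset.subset_insert _ _

lemma kruskal_mono (L : List (Sym2 V)) : ∀ {k l : ℕ}, k ≤ l → l ≤ L.length →
    kruskal (L.take k) ⊆ kruskal (L.take l) := by
  intro k l hkl hl
  induction l with
  | zero => simpa [Nat.le_zero.mp hkl] using Finset.Subset.refl _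
  | succ n ih =>
    rcases Nat.lt_or_ge k (n+1) with h | h
    · exact (ih (by omega) (by omega)).trans (kruskal_mono_step L n (by omega))
    · have : k = n + 1 := by omega
      subst this; exact Finset.Subset.refl _

lemma toFinset_take_succ (L : List (Sym2 V)) (k : ℕ) (h : k < L.length) :
    (L.take (k+1)).toFinset = insert (L.get ⟨k, h⟩) ((L.take k).toFinset) := by
  rw [List.take_succ, List.getElem?_eq_getElem h, List.toFinset_append]
  ext x
  simp [or_comm, List.get_eq_getElem]

lemma kruskal_invariant (L : List (Sym2 V)) (hd : ∀ e ∈ L, ¬ e.IsDiag) :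
    ∀ k, k ≤ L.length →
      (kruskal (L.take k) ⊆ (L.take k).toFinset) ∧
      (SimpleGraph.fromEdgeSet ((kruskal (L.take k) : Finset (Sym2 V)) : Set (Sym2 V))).IsAcyclic ∧
      (∀ x y : V, (SimpleGraph.fromEdgeSet ((kruskal (L.take k) : Finset (Sym2 V)) : Set (Sym2 V))).Reachable x y
        ↔ (SimpleGraph.fromEdgeSet (((L.take k).toFinset : Finset (Sym2 V)) : Set (Sym2 V))).Reachable x y) ∧
      (kruskal (L.take k)).card + Ncc ((L.take k).toFinset) = Fintype.card V := by
  intro k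
  induction k with
  | zero =>
    intro _
    have h1 : kruskal (L.take 0) = ∅ := rfl
    have h2 : (L.take 0).toFinset = ∅ := rfl
    rw [h1, h2]
    refine ⟨Finset.Subset.refl _, ?_, fun x y => Iff.rfl, by simpa using Ncc_empty⟩
    rw [Finset.coe_empty, SimpleGraph.fromEdgeSet_empty]
    exact isAcyclic_bot
  | succ k ih =>
    intro hk1
    have hk : k < L.length := by omega
    obtain ⟨hsub, hac, hreach, hcard⟩ := ih (by omega)
    obtain ⟨u, v, he⟩ : ∃ u v : V, L.get ⟨k, hk⟩ = s(u,v) :=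
      Sym2.ind (fun u v => ⟨u, v, rfl⟩) (L.get ⟨k, hk⟩)
    have hstep := kruskal_take_succ L k hk
    have htf := toFinset_take_succ L k hk
    rw [he] at hstep htf
    by_cases hr : (SimpleGraph.fromEdgeSet ((kruskal (L.take k) : Finset (Sym2 V)) : Set (Sym2 V))).Reachable u v
    · -- reachable case
      have hruvF : (SimpleGraph.fromEdgeSet (((L.take k).toFinset : Finset (Sym2 V)) : Set (Sym2 V))).Reachable u v :=
        (hreach u v).mp hr
      rw [if_pos ((sameComp_iff _ u v).mpr hr)] at hstep
      rw [hstep, htf]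
      refine ⟨hsub.trans (Finset.subset_insert _ _), hac, ?_, ?_⟩
      · intro x y
        rw [reach_insert_reachable_iff hruvF x y]
        exact hreach x y
      · rw [Ncc_insert_reachable hruvF]
        exact hcard
    · -- not reachable case
      have hne : u ≠ v := by
        have h1 : L.get ⟨k, hk⟩ ∈ L := List.get_mem L ⟨k, hk⟩
        rw [he] at h1
        have := hd _ h1
        simpa [Sym2.isDiag_iff_proj_eq] using this
      have hnrF : ¬ (SimpleGraph.fromEdgeSet (((L.take k).toFinset : Finset (Sym2 V)) : Set (Sym2 V))).Reachable u v :=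
        fun h => hr ((hreach u v).mpr h)
      rw [if_neg (fun h => hr ((sameComp_iff _ u v).mp h))] at hstep
      rw [hstep, htf]
      refine ⟨Finset.insert_subset_insert _ hsub, isAcyclic_insert hne hac hr, ?_, ?_⟩
      · intro x y
        rw [fromEdgeSet_insert' _ _ u v rfl, fromEdgeSet_insert' _ _ u v rfl,
          reachable_sup_edge_iff, reachable_sup_edge_iff]
        constructor
        · rintro (h1 | ⟨h1, h2⟩ | ⟨h1, h2⟩)
          · exact Or.inl ((hreach _ _).mp h1)
          · exact Or.inr (Or.inl ⟨(hreach _ _).mp h1, (hreach _ _).mp h2⟩)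
          · exact Or.inr (Or.inr ⟨(hreach _ _).mp h1, (hreach _ _).mp h2⟩)
        · rintro (h1 | ⟨h1, h2⟩ | ⟨h1, h2⟩)
          · exact Or.inl ((hreach _ _).mpr h1)
          · exact Or.inr (Or.inl ⟨(hreach _ _).mpr h1, (hreach _ _).mpr h2⟩)
          · exact Or.inr (Or.inr ⟨(hreach _ _).mpr h1, (hreach _ _).mpr h2⟩)
      · have hcat : (insert s(u,v) (kruskal (L.take k))).card = (kruskal (L.take k)).card + 1 := by
          apply Finset.card_insert_of_notMem
          intro hmem
          exact hr ((SimpleGraph.fromEdgeSet_adj (((kruskal (L.take k) : Finset (Sym2 V))) : Set (Sym2 V))).mpr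
            ⟨by exact_mod_cast hmem, hne⟩).reachable
        have h2 := Ncc_insert_not_reachable hnrF
        omega

lemma acyclic_subset_bound {B F : Finset (Sym2 V)} (hBF : B ⊆ F) (hd : ∀ e ∈ B, ¬ e.IsDiag)
    (hac : (SimpleGraph.fromEdgeSet (B : Set (Sym2 V))).IsAcyclic) :
    B.card + Ncc F ≤ Fintype.card V := by
  have h1 := ncc_add_card_of_acyclic B hd hac
  have h2 := Ncc_anti hBF
  omega

lemma mem_support_of_adj {F : Finset (Sym2 V)} {a c : V}
    (h : (SimpleGraph.fromEdgeSet (F : Set (Sym2 V))).Adj a c) :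
    a ∈ {v : V | ∃ e ∈ F, v ∈ e} ∧ c ∈ {v : V | ∃ e ∈ F, v ∈ e} := by
  rw [SimpleGraph.fromEdgeSet_adj] at h
  exact ⟨⟨s(a,c), by exact_mod_cast h.1, Sym2.mem_mk_left a c⟩,
    ⟨s(a,c), by exact_mod_cast h.1, Sym2.mem_mk_right a c⟩⟩

lemma reach_induce_of_reach {F : Finset (Sym2 V)} {a b : V}
    (ha : a ∈ {v : V | ∃ e ∈ F, v ∈ e}) (hb : b ∈ {v : V | ∃ e ∈ F, v ∈ e})
    (h : (SimpleGraph.fromEdgeSet (F : Set (Sym2 V))).Reachable a b) :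
    ((SimpleGraph.fromEdgeSet (F : Set (Sym2 V))).induce
      {v : V | ∃ e ∈ F, v ∈ e}).Reachable ⟨a, ha⟩ ⟨b, hb⟩ := by
  obtain ⟨p⟩ := h
  revert ha hb
  induction p with
  | nil => intro ha hb; exact Reachable.refl _
  | @cons a c b h p ih =>
    intro ha hb
    have hac := mem_support_of_adj h
    have step : ((SimpleGraph.fromEdgeSet (F : Set (Sym2 V))).induce
        {v : V | ∃ e ∈ F, v ∈ e}).Adj ⟨a, ha⟩ ⟨c, hac.2⟩ := h
    exact step.reachable.trans (ih hac.2 hb)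

lemma isolated_reach {F : Finset (Sym2 V)} {a b : V}
    (ha : a ∉ {v : V | ∃ e ∈ F, v ∈ e})
    (h : (SimpleGraph.fromEdgeSet (F : Set (Sym2 V))).Reachable a b) : a = b := by
  obtain ⟨p⟩ := h
  cases p with
  | nil => rfl
  | cons h p => exact absurd (mem_support_of_adj h).1 ha

lemma numComponents_bridge (F : Finset (Sym2 V)) :
    numComponents F + Fintype.card V
      = Ncc F + (Finset.univ.filter (fun v : V => ∃ e ∈ F, v ∈ e)).card := by
  classical
  set S : Set V := {v : V | ∃ e ∈ F, v ∈ e} with hS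
  set H := SimpleGraph.fromEdgeSet (F : Set (Sym2 V)) with hH
  haveI : Fintype H.ConnectedComponent := Fintype.ofFinite _
  haveI : Fintype (H.induce S).ConnectedComponent := Fintype.ofFinite _
  set ι : (H.induce S).ConnectedComponent → H.ConnectedComponent :=
    ConnectedComponent.lift (fun x => H.connectedComponentMk x.val)
      (fun x y p _ => ConnectedComponent.sound
        (p.map (SimpleGraph.Embedding.induce S).toHom).reachable)
    with hι
  have hι_inj : Function.Injective ι := by
    refine ConnectedComponent.ind₂ ?_
    intro x y hxy
    exact ConnectedComponent.sound
      (reach_induce_of_reach x.2 y.2 (ConnectedComponent.exact hxy))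
  set P : H.ConnectedComponent → Prop := fun c => ∃ v ∈ S, H.connectedComponentMk v = c with hP
  have himg : Finset.univ.filter P = Finset.univ.image ι := by
    ext c
    rw [Finset.mem_filter, Finset.mem_image]
    constructor
    · rintro ⟨-, v, hv, rfl⟩
      exact ⟨(H.induce S).connectedComponentMk ⟨v, hv⟩, Finset.mem_univ _, rfl⟩
    · rintro ⟨x, -, rfl⟩
      refine ⟨Finset.mem_univ _, ?_⟩
      refine ConnectedComponent.ind (fun y => ?_) x
      exact ⟨y.val, y.2, rfl⟩
  have hnimg : Finset.univ.filter (fun c => ¬ P c)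
      = (Finset.univ.filter (fun v : V => v ∉ S)).image (fun v => H.connectedComponentMk v) := by
    ext c
    rw [Finset.mem_filter, Finset.mem_image]
    constructor
    · rintro ⟨-, hc⟩
      obtain ⟨v, rfl⟩ := c.exists_rep
      refine ⟨v, Finset.mem_filter.mpr ⟨Finset.mem_univ _, fun hv => hc ⟨v, hv, rfl⟩⟩, rfl⟩
    · rintro ⟨v, hv, rfl⟩
      refine ⟨Finset.mem_univ _, ?_⟩
      rintro ⟨w, hw, hcw⟩
      have hv' : v ∉ S := (Finset.mem_filter.mp hv).2
      have : v = w := isolated_reach hv' (ConnectedComponent.exact hcw).symm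
      exact hv' (this ▸ hw)
  have hmkinj : Set.InjOn (fun v => H.connectedComponentMk v)
      ↑(Finset.univ.filter (fun v : V => v ∉ S)) := by
    intro x hx y _ hxy
    exact isolated_reach (Finset.mem_filter.mp (Finset.mem_coe.mp hx)).2
      (ConnectedComponent.exact hxy)
  have hcard1 : (Finset.univ.filter P).card
      = Fintype.card (H.induce S).ConnectedComponent := by
    rw [himg, Finset.card_image_of_injective _ hι_inj, Finset.card_univ]
  have hcard2 : (Finset.univ.filter (fun c => ¬ P c)).card
      = (Finset.univ.filter (fun v : V => v ∉ S)).card := by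
    rw [hnimg, Finset.card_image_of_injOn hmkinj]
  have hsplit := Finset.card_filter_add_card_filter_not
    (s := (Finset.univ : Finset H.ConnectedComponent)) (p := P)
  have hsplitV := Finset.card_filter_add_card_filter_not
    (s := (Finset.univ : Finset V)) (p := fun v : V => v ∈ S)
  rw [Finset.card_univ] at hsplit hsplitV
  have e1 : numComponents F = Fintype.card (H.induce S).ConnectedComponent := by
    rw [numComponents, Nat.card_eq_fintype_card]
  have e2 : Ncc F = Fintype.card H.ConnectedComponent := by
    rw [Ncc, Nat.card_eq_fintype_card]
  have e3 : (Finset.univ.filter (fun v : V => ∃ e ∈ F, v ∈ e))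
      = (Finset.univ.filter (fun v : V => v ∈ S)) := rfl
  rw [e1, e2, e3]
  omega

lemma kruskal_main {G : SimpleGraph V} (hG : G.Connected) [DecidableRel G.Adj]
    (L : List (Sym2 V)) (hL : L.toFinset = G.edgeFinset) :
    ∃ A : Finset (Sym2 V), A ⊆ G.edgeFinset ∧
      SimpleGraph.fromEdgeSet (A : Set (Sym2 V)) ≤ G ∧
      (SimpleGraph.fromEdgeSet (A : Set (Sym2 V))).IsTree ∧
      ∀ k, k ≤ L.length →
        ((kruskal L) ∩ (L.take k).toFinset).card + Ncc ((L.take k).toFinset)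
          = Fintype.card V ∧ kruskal L = A := by
  classical
  have hd : ∀ e ∈ L, ¬ e.IsDiag := by
    intro e he
    have h1 : e ∈ G.edgeFinset := hL ▸ List.mem_toFinset.mpr he
    exact (G.not_isDiag_of_mem_edgeSet (SimpleGraph.mem_edgeFinset.mp h1))
  obtain ⟨hsub, hac, hreach, hcard⟩ := kruskal_invariant L hd L.length le_rfl
  rw [List.take_length] at hsub hac hreach hcard
  have hAE : kruskal L ⊆ G.edgeFinset := hL ▸ hsub
  have hGeq : SimpleGraph.fromEdgeSet ((L.toFinset : Finset (Sym2 V)) : Set (Sym2 V)) = G := by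
    rw [hL, coe_edgeFinset, fromEdgeSet_edgeSet]
  have hle : SimpleGraph.fromEdgeSet ((kruskal L : Finset (Sym2 V)) : Set (Sym2 V)) ≤ G := by
    rw [← hGeq]
    exact fromEdgeSet_mono (by exact_mod_cast hsub)
  have hconn : (SimpleGraph.fromEdgeSet ((kruskal L : Finset (Sym2 V)) : Set (Sym2 V))).Connected := by
    haveI : Nonempty V := hG.nonempty
    refine SimpleGraph.Connected.mk (fun x y => (hreach x y).mpr ?_)
    rw [hGeq]
    exact hG.preconnected x y
  refine ⟨kruskal L, hAE, hle, ⟨hconn, hac⟩, ?_⟩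
  intro k hk
  refine ⟨?_, rfl⟩
  obtain ⟨hsubk, hack, hreachk, hcardk⟩ := kruskal_invariant L hd k hk
  have hsubA : kruskal (L.take k) ⊆ (kruskal L) ∩ (L.take k).toFinset := by
    refine Finset.subset_inter ?_ hsubk
    have := kruskal_mono L hk le_rfl
    rwa [List.take_length] at this
  have hge : (kruskal (L.take k)).card ≤ ((kruskal L) ∩ (L.take k).toFinset).card :=
    Finset.card_le_card hsubA
  have hnd : ∀ e ∈ (kruskal L) ∩ (L.take k).toFinset, ¬ e.IsDiag := by
    intro e he
    have : e ∈ L := by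
      have h2 := (Finset.mem_inter.mp he).2
      exact (L.take_sublist k).mem (List.mem_toFinset.mp h2)
    exact hd e this
  have hacB : (SimpleGraph.fromEdgeSet (((kruskal L) ∩ (L.take k).toFinset : Finset (Sym2 V)) : Set (Sym2 V))).IsAcyclic := by
    refine isAcyclic_anti (fromEdgeSet_mono ?_) hac
    exact_mod_cast Finset.inter_subset_left
  have hub := acyclic_subset_bound (Finset.inter_subset_right) hnd hacB
  omega

lemma abel_identity1 (w s : ℕ → ℝ) (m : ℕ) :
    ∑ k ∈ Finset.range m, w k * (s (k+1) - s k)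
      = (∑ k ∈ Finset.range m, (w k - w (k+1)) * s (k+1)) + w m * s m - w 0 * s 0 := by
  induction m with
  | zero => simp
  | succ n ih => rw [Finset.sum_range_succ, Finset.sum_range_succ, ih]; ring

lemma abel_identity2 (w : ℕ → ℝ) (m : ℕ) :
    ∑ k ∈ Finset.range m, (w k - w (k+1)) * ((k : ℝ)+1)
      = (∑ k ∈ Finset.range m, w k) - w m * m := by
  induction m with
  | zero => simp
  | succ n ih =>
    rw [Finset.sum_range_succ, Finset.sum_range_succ, ih]
    push_cast
    ring

lemma abel_bound (m : ℕ) (w s : ℕ → ℝ) (r : ℝ)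
    (hw : ∀ k, k < m → w (k+1) ≤ w k) (hw0 : w m = 0) (hs0 : s 0 = 0)
    (hs : ∀ k, k ≤ m → r * k ≤ s k) :
    r * (∑ k ∈ Finset.range m, w k) ≤ ∑ k ∈ Finset.range m, w k * (s (k+1) - s k) := by
  have h1 := abel_identity1 w s m
  have h2 := abel_identity2 w m
  have key : ∑ k ∈ Finset.range m, (w k - w (k+1)) * (r * ((k:ℝ)+1))
      ≤ ∑ k ∈ Finset.range m, (w k - w (k+1)) * s (k+1) := by
    apply Finset.sum_le_sum
    intro k hk
    have hk' := Finset.mem_range.mp hk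
    have h3 : r * ((k:ℝ)+1) ≤ s (k+1) := by
      have := hs (k+1) hk'
      push_cast at this
      linarith
    have h4 : 0 ≤ w k - w (k+1) := by linarith [hw k hk']
    exact mul_le_mul_of_nonneg_left h3 h4
  have h5 : ∑ k ∈ Finset.range m, (w k - w (k+1)) * (r * ((k:ℝ)+1))
      = r * ∑ k ∈ Finset.range m, (w k - w (k+1)) * ((k:ℝ)+1) := by
    rw [Finset.mul_sum]
    exact Finset.sum_congr rfl (fun k _ => by ring)
  rw [hw0] at h1 h2
  rw [hs0] at h1
  rw [h2] at h5
  simp only [zero_mul, mul_zero, add_zero, sub_zero] at h1 h5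
  rw [h1]
  rw [h5] at key
  linarith

lemma sum_finset_eq_sum_range {α : Type*} [DecidableEq α] (L : List α) (hnd : L.Nodup)
    (f : α → ℝ) :
    ∑ e ∈ L.toFinset, f e
      = ∑ k ∈ Finset.range L.length, (if h : k < L.length then f (L.get ⟨k, h⟩) else 0) := by
  rw [← Fin.sum_univ_eq_sum_range]
  have hval : ∀ i : Fin L.length,
      (if h : (i:ℕ) < L.length then f (L.get ⟨i, h⟩) else 0) = f (L.get i) :=
    fun i => dif_pos i.isLt
  rw [Finset.sum_congr rfl (fun i _ => hval i)]
  refine (Finset.sum_bij (fun (i : Fin L.length) _ => L.get i) ?_ ?_ ?_ ?_).symm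
  · intro i _
    exact List.mem_toFinset.mpr (L.get_mem i)
  · intro i _ j _ hij
    exact (List.Nodup.get_inj_iff hnd).mp hij
  · intro e he
    obtain ⟨i, hi⟩ := List.mem_iff_get.mp (List.mem_toFinset.mp he)
    exact ⟨i, Finset.mem_univ _, hi⟩
  · intro i _
    rfl


end Aux

/-- Constant-support dual optimum: there is a minimizer `w*` of
`w ↦ max_{T∈𝒯(G)} Σ_{e∈T} w_e` over probability distributions `w` on `E` whose
nonzero entries are all equal; consequently the minimum equals
`min_{∅ ≠ F ⊆ E} (|V(F)|−c(F))/|F|`. -/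
theorem dual_constant_support_optimum
    {V : Type*} [Fintype V] [DecidableEq V]
    (G : SimpleGraph V) [DecidableRel G.Adj] (hG : G.Connected)
    (hE : G.edgeFinset.Nonempty)
    [Fintype {T : SimpleGraph V // T ≤ G ∧ T.IsTree}] :
    ∃ w : Sym2 V → ℝ,
      (∀ e, 0 ≤ w e) ∧ (∑ e ∈ G.edgeFinset, w e = 1) ∧
      (∀ w' : Sym2 V → ℝ, (∀ e, 0 ≤ w' e) → (∑ e ∈ G.edgeFinset, w' e = 1) →
        sSup {s : ℝ | ∃ T : {T : SimpleGraph V // T ≤ G ∧ T.IsTree},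
            s = ∑ e ∈ G.edgeFinset,
                  w e * (if e ∈ (T : SimpleGraph V).edgeSet then (1 : ℝ) else 0)}
          ≤ sSup {s : ℝ | ∃ T : {T : SimpleGraph V // T ≤ G ∧ T.IsTree},
            s = ∑ e ∈ G.edgeFinset,
                  w' e * (if e ∈ (T : SimpleGraph V).edgeSet then (1 : ℝ) else 0)}) ∧
      (∃ c : ℝ, ∀ e ∈ G.edgeFinset, w e ≠ 0 → w e = c) ∧
      sSup {s : ℝ | ∃ T : {T : SimpleGraph V // T ≤ G ∧ T.IsTree},
          s = ∑ e ∈ G.edgeFinset,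
                w e * (if e ∈ (T : SimpleGraph V).edgeSet then (1 : ℝ) else 0)}
        = sInf {r : ℝ | ∃ F : Finset (Sym2 V), F ⊆ G.edgeFinset ∧ F.Nonempty ∧
            r = (((Finset.univ.filter (fun v : V => ∃ e ∈ F, v ∈ e)).card : ℝ)
                  - numComponents F) / (F.card : ℝ)} := by
  classical
  set E := G.edgeFinset with hEdef
  have hnondiagE : ∀ e ∈ E, ¬ e.IsDiag :=
    fun e he => G.not_isDiag_of_mem_edgeSet (SimpleGraph.mem_edgeFinset.mp he)
  -- the value of a tree under weights w
  set val : (Sym2 V → ℝ) → {T : SimpleGraph V // T ≤ G ∧ T.IsTree} → ℝ :=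
    fun w T => ∑ e ∈ E, w e * (if e ∈ (T : SimpleGraph V).edgeSet then (1 : ℝ) else 0)
    with hvaldef
  have hval : ∀ (w : Sym2 V → ℝ) (T : {T : SimpleGraph V // T ≤ G ∧ T.IsTree}),
      val w T = ∑ e ∈ E.filter (fun e => e ∈ (T : SimpleGraph V).edgeSet), w e := by
    intro w T
    rw [hvaldef, Finset.sum_filter]
    exact Finset.sum_congr rfl (fun e _ => by by_cases h : e ∈ (T : SimpleGraph V).edgeSet <;>
      simp [h])
  -- conversion of the numerator
  have hconv : ∀ F : Finset (Sym2 V),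
      (((Finset.univ.filter (fun v : V => ∃ e ∈ F, v ∈ e)).card : ℝ) - numComponents F)
        = (Fintype.card V : ℝ) - Ncc F := by
    intro F
    have := numComponents_bridge F
    have h2 : ((numComponents F : ℝ) + Fintype.card V)
        = (Ncc F : ℝ) + (Finset.univ.filter (fun v : V => ∃ e ∈ F, v ∈ e)).card := by
      exact_mod_cast congrArg (fun n : ℕ => (n : ℝ)) this
    linarith
  -- the candidate set on the right
  set Rset : Set ℝ := {r : ℝ | ∃ F : Finset (Sym2 V), F ⊆ E ∧ F.Nonempty ∧
      r = (((Finset.univ.filter (fun v : V => ∃ e ∈ F, v ∈ e)).card : ℝ)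
            - numComponents F) / (F.card : ℝ)} with hRdef
  have hRalt : Rset = {r : ℝ | ∃ F : Finset (Sym2 V), F ⊆ E ∧ F.Nonempty ∧
      r = ((Fintype.card V : ℝ) - Ncc F) / (F.card : ℝ)} := by
    ext r
    constructor
    · rintro ⟨F, h1, h2, rfl⟩
      exact ⟨F, h1, h2, by rw [hconv F]⟩
    · rintro ⟨F, h1, h2, rfl⟩
      exact ⟨F, h1, h2, by rw [hconv F]⟩
  have hRfin : Rset.Finite := by
    rw [hRalt]
    apply Set.Finite.subset
      (Finset.finite_toSet (E.powerset.image
        (fun F : Finset (Sym2 V) => ((Fintype.card V : ℝ) - Ncc F) / (F.card : ℝ))))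
    rintro r ⟨F, h1, _, rfl⟩
    exact Finset.mem_coe.mpr (Finset.mem_image.mpr ⟨F, Finset.mem_powerset.mpr h1, rfl⟩)
  have hRne : Rset.Nonempty := ⟨_, E, Finset.Subset.refl _, hE, rfl⟩
  set rstar := sInf Rset with hrstar
  have hmem0 : rstar ∈ Rset := hRne.csInf_mem hRfin
  rw [hRalt] at hmem0
  obtain ⟨Fs, hFsE, hFsne, hFsval⟩ := hmem0
  have hFscard : (0 : ℝ) < (Fs.card : ℝ) := by
    exact_mod_cast Finset.card_pos.mpr hFsne
  have hlbR : ∀ F : Finset (Sym2 V), F ⊆ E → F.Nonempty →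
      rstar ≤ ((Fintype.card V : ℝ) - Ncc F) / (F.card : ℝ) := by
    intro F h1 h2
    apply csInf_le hRfin.bddBelow
    rw [hRalt]
    exact ⟨F, h1, h2, rfl⟩
  -- Kruskal tree adapted to Fs
  set L0 : List (Sym2 V) := Fs.toList ++ (E \ Fs).toList with hL0def
  have hL0 : L0.toFinset = E := by
    rw [hL0def, List.toFinset_append, Finset.toList_toFinset, Finset.toList_toFinset]
    exact Finset.union_sdiff_of_subset hFsE
  obtain ⟨As, hAsE, hAsle, hAstree, hAspref⟩ := kruskal_main hG L0 hL0
  have hAseq : kruskal L0 = As := (hAspref 0 (Nat.zero_le _)).2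
  have hAsnondiag : ∀ e ∈ As, ¬ e.IsDiag := fun e he => hnondiagE e (hAsE he)
  set Tstar : {T : SimpleGraph V // T ≤ G ∧ T.IsTree} :=
    ⟨SimpleGraph.fromEdgeSet ((As : Finset (Sym2 V)) : Set (Sym2 V)), hAsle, hAstree⟩
    with hTstar
  -- prefix identity at Fs
  have hFs_take : (L0.take Fs.toList.length).toFinset = Fs := by
    rw [hL0def, List.take_left, Finset.toList_toFinset]
  have hFs_ident : (As ∩ Fs).card + Ncc Fs = Fintype.card V := by
    have h := (hAspref Fs.toList.length (by rw [hL0def]; simp)).1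
    rw [hAseq, hFs_take] at h
    exact h
  -- membership in tree edge set vs membership in A, for edge sets A of trees
  have hmemiff : ∀ (A : Finset (Sym2 V)), (∀ e ∈ A, ¬ e.IsDiag) → ∀ e ∈ E,
      (e ∈ (SimpleGraph.fromEdgeSet ((A : Finset (Sym2 V)) : Set (Sym2 V))).edgeSet ↔ e ∈ A) := by
    intro A hnd e _
    rw [SimpleGraph.edgeSet_fromEdgeSet]
    constructor
    · rintro ⟨h1, _⟩
      exact_mod_cast h1
    · intro h
      exact ⟨by exact_mod_cast h, hnd e h⟩
  -- S-sets are nonempty and bounded above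
  have hSne : ∀ w : Sym2 V → ℝ,
      {s : ℝ | ∃ T : {T : SimpleGraph V // T ≤ G ∧ T.IsTree}, s = val w T}.Nonempty :=
    fun w => ⟨val w Tstar, Tstar, rfl⟩
  have hSfin : ∀ w : Sym2 V → ℝ,
      {s : ℝ | ∃ T : {T : SimpleGraph V // T ≤ G ∧ T.IsTree}, s = val w T}.Finite := by
    intro w
    have : {s : ℝ | ∃ T : {T : SimpleGraph V // T ≤ G ∧ T.IsTree}, s = val w T}
        = Set.range (fun T => val w T) := by
      ext s; exact ⟨fun ⟨T, h⟩ => ⟨T, h.symm⟩, fun ⟨T, h⟩ => ⟨T, h.symm⟩⟩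
    rw [this]
    exact Set.finite_range _
  -- the constant-support weight
  set wstar : Sym2 V → ℝ := fun e => if e ∈ Fs then (Fs.card : ℝ)⁻¹ else 0 with hwstar
  have hwnn : ∀ e, 0 ≤ wstar e := by
    intro e
    simp only [hwstar]
    by_cases h : e ∈ Fs <;> simp [h] <;> positivity
  have hwsum : ∑ e ∈ E, wstar e = 1 := by
    simp only [hwstar]
    rw [Finset.sum_ite_mem, Finset.inter_eq_right.mpr hFsE, Finset.sum_const, nsmul_eq_mul]
    field_simp
  -- value of any tree under wstar
  have hvalwstar : ∀ T : {T : SimpleGraph V // T ≤ G ∧ T.IsTree},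
      val wstar T = (((E.filter (fun e => e ∈ (T : SimpleGraph V).edgeSet)) ∩ Fs).card : ℝ)
        * (Fs.card : ℝ)⁻¹ := by
    intro T
    rw [hval]
    simp only [hwstar]
    rw [Finset.sum_ite_mem, Finset.sum_const, nsmul_eq_mul]
  -- upper bound: every tree value is at most rstar
  have hub : ∀ T : {T : SimpleGraph V // T ≤ G ∧ T.IsTree}, val wstar T ≤ rstar := by
    intro T
    rw [hvalwstar T]
    set B := (E.filter (fun e => e ∈ (T : SimpleGraph V).edgeSet)) ∩ Fs with hB
    have hBFs : B ⊆ Fs := Finset.inter_subset_right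
    have hBnd : ∀ e ∈ B, ¬ e.IsDiag := fun e he => hnondiagE e
      (Finset.mem_filter.mp (Finset.mem_inter.mp he).1).1
    have hBac : (SimpleGraph.fromEdgeSet ((B : Finset (Sym2 V)) : Set (Sym2 V))).IsAcyclic := by
      have hTac : (T : SimpleGraph V).IsAcyclic := ((SimpleGraph.isTree_iff _).mp T.2.2).2
      refine isAcyclic_anti ?_ hTac
      have hsub : ((B : Finset (Sym2 V)) : Set (Sym2 V)) ⊆ (T : SimpleGraph V).edgeSet := by
        intro e he
        have h1 := Finset.mem_coe.mp he
        exact (Finset.mem_filter.mp (Finset.mem_inter.mp h1).1).2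
      calc SimpleGraph.fromEdgeSet ((B : Finset (Sym2 V)) : Set (Sym2 V))
          ≤ SimpleGraph.fromEdgeSet (T : SimpleGraph V).edgeSet := fromEdgeSet_mono hsub
        _ = (T : SimpleGraph V) := SimpleGraph.fromEdgeSet_edgeSet _
    have hbound := acyclic_subset_bound hBFs hBnd hBac
    have hcardB : (B.card : ℝ) ≤ (Fintype.card V : ℝ) - Ncc Fs := by
      have : (B.card : ℝ) + Ncc Fs ≤ (Fintype.card V : ℝ) := by exact_mod_cast hbound
      linarith
    rw [hFsval, div_eq_mul_inv]
    exact mul_le_mul_of_nonneg_right hcardB (by positivity)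
  -- the Kruskal tree attains rstar
  have hattain : val wstar Tstar = rstar := by
    rw [hvalwstar Tstar]
    have hBeq : (E.filter (fun e => e ∈ (Tstar : SimpleGraph V).edgeSet)) = As := by
      ext e
      rw [Finset.mem_filter]
      constructor
      · rintro ⟨h1, h2⟩
        exact (hmemiff As hAsnondiag e h1).mp h2
      · intro h
        exact ⟨hAsE h, (hmemiff As hAsnondiag e (hAsE h)).mpr h⟩
    have hc : ∀ X : Finset (Sym2 V), (∀ x, x ∈ X ↔ x ∈ As) → (X ∩ Fs).card = (As ∩ Fs).card :=
      fun X hX => by rw [Finset.ext hX]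
    rw [hc _ ?_, hFsval, div_eq_mul_inv]
    swap
    · intro x
      have hx := Finset.ext_iff.mp hBeq x
      simp only [Finset.mem_filter] at hx ⊢
      exact hx
    congr 1
    have : ((As ∩ Fs).card : ℝ) + Ncc Fs = (Fintype.card V : ℝ) := by exact_mod_cast hFs_ident
    linarith
  have hSup_wstar : sSup {s : ℝ | ∃ T : {T : SimpleGraph V // T ≤ G ∧ T.IsTree},
      s = val wstar T} = rstar := by
    apply le_antisymm
    · apply csSup_le (hSne wstar)
      rintro s ⟨T, rfl⟩
      exact hub T
    · exact le_csSup (hSfin wstar).bddAbove ⟨Tstar, hattain.symm⟩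
  -- minimality: any probability vector w' has sSup at least rstar
  have hmin : ∀ w' : Sym2 V → ℝ, (∀ e, 0 ≤ w' e) → (∑ e ∈ E, w' e = 1) →
      rstar ≤ sSup {s : ℝ | ∃ T : {T : SimpleGraph V // T ≤ G ∧ T.IsTree}, s = val w' T} := by
    intro w' hw'nn hw'sum
    -- sort the edges by decreasing weight
    set r : Sym2 V → Sym2 V → Prop := fun a b => w' b ≤ w' a with hrdef
    haveI : IsTotal (Sym2 V) r := ⟨fun a b => le_total (w' b) (w' a)⟩
    haveI : IsTrans (Sym2 V) r := ⟨fun a b c hab hbc => le_trans hbc hab⟩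
    set L : List (Sym2 V) := List.insertionSort r E.toList with hLdef
    have hperm : List.Perm L E.toList := List.perm_insertionSort r E.toList
    have hnodup : L.Nodup := hperm.nodup_iff.mpr (Finset.nodup_toList E)
    have hLE : L.toFinset = E := by
      rw [List.toFinset_eq_of_perm _ _ hperm, Finset.toList_toFinset]
    have hsorted : List.Pairwise r L := List.pairwise_insertionSort r E.toList
    set m := L.length with hm
    obtain ⟨A, hAE, hAle, hAtree, hApref⟩ := kruskal_main hG L hLE
    have hAeq : kruskal L = A := (hApref 0 (Nat.zero_le _)).2
    have hAnondiag : ∀ e ∈ A, ¬ e.IsDiag := fun e he => hnondiagE e (hAE he)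
    set T' : {T : SimpleGraph V // T ≤ G ∧ T.IsTree} :=
      ⟨SimpleGraph.fromEdgeSet ((A : Finset (Sym2 V)) : Set (Sym2 V)), hAle, hAtree⟩ with hT'
    set wseq : ℕ → ℝ := fun k => if h : k < L.length then w' (L.get ⟨k, h⟩) else 0 with hwseq
    set sseq : ℕ → ℝ := fun k => ((A ∩ (L.take k).toFinset).card : ℝ) with hsseq
    -- abel hypotheses
    have habel : rstar * (∑ k ∈ Finset.range m, wseq k)
        ≤ ∑ k ∈ Finset.range m, wseq k * (sseq (k+1) - sseq k) := by
      apply abel_bound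
      · intro k hk
        simp only [hwseq]
        rw [dif_pos hk]
        by_cases h2 : k + 1 < L.length
        · rw [dif_pos h2]
          exact List.Pairwise.rel_get_of_lt hsorted (by exact Nat.lt_succ_self k)
        · rw [dif_neg h2]
          exact hw'nn _
      · simp only [hwseq]
        exact dif_neg (lt_irrefl m)
      · simp only [hsseq]
        simp
      · intro k hk
        rcases Nat.eq_zero_or_pos k with rfl | hkpos
        · simp only [hsseq]; simp
        have hFkE : (L.take k).toFinset ⊆ E := by
          intro e he
          rw [← hLE]
          exact List.mem_toFinset.mpr ((L.take_sublist k).mem (List.mem_toFinset.mp he))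
        have hFkcard : ((L.take k).toFinset).card = k := by
          rw [List.toFinset_card_of_nodup (hnodup.sublist (L.take_sublist k)),
            List.length_take]
          omega
        have hFkne : ((L.take k).toFinset).Nonempty := by
          rw [← Finset.card_pos, hFkcard]; omega
        have h1 := hlbR _ hFkE hFkne
        rw [hFkcard] at h1
        have h2 := (hApref k hk).1
        rw [hAeq] at h2
        have h3 : sseq k = (Fintype.card V : ℝ) - Ncc ((L.take k).toFinset) := by
          simp only [hsseq]
          have : ((A ∩ (L.take k).toFinset).card : ℝ) + Ncc ((L.take k).toFinset)
              = (Fintype.card V : ℝ) := by exact_mod_cast h2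
          linarith
        rw [h3]
        have hkpos' : (0:ℝ) < (k:ℝ) := by exact_mod_cast hkpos
        rw [le_div_iff₀ hkpos'] at h1
        linarith
    -- LHS equals rstar
    have hLHS : ∑ k ∈ Finset.range m, wseq k = 1 := by
      rw [← hw'sum, ← hLE, sum_finset_eq_sum_range L hnodup w']
    -- RHS equals the value of T'
    have hstep : ∀ k ∈ Finset.range m, wseq k * (sseq (k+1) - sseq k)
        = (if h : k < L.length then
            (w' (L.get ⟨k, h⟩) * (if (L.get ⟨k, h⟩) ∈ A then (1:ℝ) else 0)) else 0) := by
      intro k hk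
      have hkm : k < L.length := Finset.mem_range.mp hk
      rw [dif_pos hkm]
      simp only [hwseq]
      rw [dif_pos hkm]
      have htf := toFinset_take_succ L k hkm
      have hnotin : L.get ⟨k, hkm⟩ ∉ (L.take k).toFinset := by
        have hnd2 : (L.take (k+1)).Nodup := hnodup.sublist (L.take_sublist (k+1))
        rw [List.take_succ, List.getElem?_eq_getElem hkm] at hnd2
        simp only [Option.toList_some] at hnd2
        rw [List.nodup_append] at hnd2
        intro hmem
        exact hnd2.2.2 _ (List.mem_toFinset.mp hmem) (L.get ⟨k, hkm⟩) (by simp [List.get_eq_getElem]) rfl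
      by_cases hmem : L.get ⟨k, hkm⟩ ∈ A
      · have hint : A ∩ (L.take (k+1)).toFinset
            = insert (L.get ⟨k, hkm⟩) (A ∩ (L.take k).toFinset) := by
          rw [htf]
          ext x
          simp only [Finset.mem_inter, Finset.mem_insert]
          constructor
          · rintro ⟨hx1, hx2 | hx3⟩
            · exact Or.inl hx2
            · exact Or.inr ⟨hx1, hx3⟩
          · rintro (rfl | ⟨hx1, hx2⟩)
            · exact ⟨hmem, Or.inl rfl⟩
            · exact ⟨hx1, Or.inr hx2⟩
        have hcardi : (A ∩ (L.take (k+1)).toFinset).card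
            = (A ∩ (L.take k).toFinset).card + 1 := by
          rw [hint, Finset.card_insert_of_notMem
            (fun h => hnotin (Finset.mem_inter.mp h).2)]
        simp only [hsseq]
        simp only [hcardi, if_pos hmem]
        push_cast
        ring
      · have hint : A ∩ (L.take (k+1)).toFinset = A ∩ (L.take k).toFinset := by
          rw [htf]
          ext x
          simp only [Finset.mem_inter, Finset.mem_insert]
          constructor
          · rintro ⟨hx1, hx2 | hx3⟩
            · exact absurd (hx2 ▸ hx1) hmem
            · exact ⟨hx1, hx3⟩
          · rintro ⟨hx1, hx2⟩
            exact ⟨hx1, Or.inr hx2⟩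
        simp only [hsseq]
        simp only [hint, if_neg hmem]
        ring
    have hRHS : ∑ k ∈ Finset.range m, wseq k * (sseq (k+1) - sseq k) = val w' T' := by
      rw [Finset.sum_congr rfl hstep, ← sum_finset_eq_sum_range L hnodup
        (fun e => w' e * (if e ∈ A then (1:ℝ) else 0)), hLE]
      rw [hvaldef]
      refine Finset.sum_congr rfl (fun e he => ?_)
      congr 1
      by_cases h : e ∈ A
      · rw [if_pos h, if_pos ((hmemiff A hAnondiag e he).mpr h)]
      · rw [if_neg h, if_neg (fun hc => h ((hmemiff A hAnondiag e he).mp hc))]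
    rw [hLHS, mul_one, hRHS] at habel
    exact habel.trans (le_csSup (hSfin w').bddAbove ⟨T', rfl⟩)
  -- assemble everything
  refine ⟨wstar, hwnn, hwsum, ?_, ⟨(Fs.card : ℝ)⁻¹, ?_⟩, ?_⟩
  · intro w' h1 h2
    have := hmin w' h1 h2
    rw [← hSup_wstar] at this
    exact this.trans_eq' rfl
  · intro e _ hne
    simp only [hwstar] at hne ⊢
    by_cases h : e ∈ Fs
    · rw [if_pos h]
    · rw [if_neg h] at hne
      exact absurd rfl hne
  · rw [hSup_wstar]
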